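/- arXiv:1406.3768 — 3 statements merged into one kernel-verified Lean document; each statement's English description precedes it below -/
import Mathlib

section
/- Let X = (X_σ)_{σ∈T} be a tree-indexed Markov chain on the full binary tree with values in a measurable space E and pair transition kernel p, and let (Σ_k) be an independent symmetric random walk on T starting from the root. Then (X_{Σ_k})_{k≥0} is a Markov chain on E with transition kernel p_R(x,A) = ½(p(x, A × E) + p(x, E × A)). -/
open MeasureTheory ProbabilityTheory
open scoped ENNReal

lemma aux_int {α : Type*} [MeasurableSpace α] (μ : Measure α) [IsFiniteMeasure μ]
    {f : α → ℝ} {c : ℝ} (hf : Measurable f) (hc : ∀ a, |f a| ≤ c) : Integrable f μ :=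
  ⟨hf.aestronglyMeasurable, HasFiniteIntegral.of_bounded (C := c)
    (ae_of_all _ fun a => by simpa [Real.norm_eq_abs] using hc a)⟩

lemma aux_abs_indicator_le {γ : Type*} {s : Set γ} {f : γ → ℝ} {c : ℝ} (hc : 0 ≤ c)
    (h : ∀ x, |f x| ≤ c) (x : γ) : |Set.indicator s f x| ≤ c := by
  by_cases hx : x ∈ s
  · simpa [Set.indicator_of_mem hx] using h x
  · simpa [Set.indicator_of_notMem hx] using hc

lemma aux_abs_integral_le {α : Type*} [MeasurableSpace α] (μ : Measure α)
    [IsProbabilityMeasure μ] {f : α → ℝ} {c : ℝ} (hc : ∀ a, |f a| ≤ c) :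
    |∫ a, f a ∂μ| ≤ c := by
  have := norm_integral_le_of_norm_le_const (μ := μ) (f := f) (C := c)
    (ae_of_all _ fun a => by simpa [Real.norm_eq_abs] using hc a)
  simpa [measure_univ, Real.norm_eq_abs] using this

/-- If `X` is a tree-indexed Markov chain on the full binary tree with pair transition
kernel `p`, and `(Σ_k)` is an independent symmetric random walk from the root (coded by
i.i.d. fair coins `C`, so that `Σ_k = (C 0, …, C (k-1))`), then the observed process
`R k = X_{Σ_k}` is a Markov chain on `E` with transition kernel
`p_R(x, A) = ½ (p(x, A × E) + p(x, E × A))`. Vertices of generation `k` are coded as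
`v : Fin k → Bool`, with children `Fin.snoc v false` and `Fin.snoc v true`. -/
theorem stmt_7 {Ω : Type*} [MeasurableSpace Ω] (P : Measure Ω) [IsProbabilityMeasure P]
    {E : Type*} [MeasurableSpace E]
    (X : (k : ℕ) → (Fin k → Bool) → Ω → E) (hXmeas : ∀ k v, Measurable (X k v))
    (p : ProbabilityTheory.Kernel E (E × E)) [IsMarkovKernel p]
    -- the tree Markov property: conditionally on all states up to generation `k`, the
    -- pairs of children states are independent with laws `p (X k v ·)`:
    (hMarkov : ∀ (k : ℕ) (g : (Fin k → Bool) → E × E → ℝ),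
      (∀ v, Measurable (g v)) → (∀ v, ∃ C, ∀ x, |g v x| ≤ C) →
      (fun ω => ∏ v : Fin k → Bool, ∫ y, g v y ∂(p (X k v ω)))
        =ᵐ[P] MeasureTheory.condExp
          (MeasurableSpace.comap
            (fun ω => fun j : Fin (k + 1) => fun v : Fin (j : ℕ) → Bool => X j v ω)
            MeasurableSpace.pi) P
          (fun ω => ∏ v : Fin k → Bool,
            g v (X (k + 1) (Fin.snoc v false) ω, X (k + 1) (Fin.snoc v true) ω)))
    -- `C` are i.i.d. fair coin flips, independent of the whole tree `X`:
    (C : ℕ → Ω → Bool) (hCmeas : ∀ k, Measurable (C k))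
    (hCiid : iIndepFun C P)
    (hCfair : ∀ k, P {ω | C k ω = true} = 2⁻¹)
    (hCX : Indep
      (MeasurableSpace.comap (fun ω => fun k : ℕ => C k ω) MeasurableSpace.pi)
      (MeasurableSpace.comap
        (fun ω => fun pr : (k : ℕ) × (Fin k → Bool) => X pr.1 pr.2 ω)
        MeasurableSpace.pi) P)
    -- the observed process and the mixed kernel:
    (R : ℕ → Ω → E) (hR : ∀ k ω, R k ω = X k (fun i => C (i : ℕ) ω) ω)
    (pR : E → Measure E)
    (hpR : ∀ x, pR x = (2⁻¹ : ℝ≥0∞) • (p x).map Prod.fst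
      + (2⁻¹ : ℝ≥0∞) • (p x).map Prod.snd) :
    -- conclusion: `R` is a Markov chain with transition kernel `pR`:
    ∀ (k : ℕ) (g : E → ℝ), Measurable g → (∃ C', ∀ x, |g x| ≤ C') →
      MeasureTheory.condExp
          (MeasurableSpace.comap (fun ω => fun j : Fin (k + 1) => R (j : ℕ) ω)
            MeasurableSpace.pi) P
          (fun ω => g (R (k + 1) ω))
        =ᵐ[P] fun ω => ∫ y, g y ∂(pR (R k ω)) := by
  intro k g hgmeas hgbd
  classical
  obtain ⟨B₀, hB₀⟩ := hgbd
  set M : ℝ := max B₀ 0 with hMdef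
  have hgM : ∀ x, |g x| ≤ M := fun x => (hB₀ x).trans (le_max_left _ _)
  have hM0 : 0 ≤ M := le_max_right _ _
  -- measurability of R
  have hRmeas : ∀ j, Measurable (R j) := by
    intro j
    have h : R j = fun ω => (fun q : Ω × (Fin j → Bool) => X j q.2 q.1) (ω, fun i => C i ω) := by
      funext ω; exact hR j ω
    rw [h]
    exact (measurable_from_prod_countable_left
        (f := fun q : Ω × (Fin j → Bool) => X j q.2 q.1) fun v => hXmeas j v).comp
      (measurable_id.prodMk (measurable_pi_lambda _ fun i => hCmeas i))
  -- the two sigma-algebras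
  set Φ : Ω → (Fin (k + 1) → E) := fun ω => fun j : Fin (k + 1) => R (j : ℕ) ω with hΦdef
  have hΦ : Measurable Φ := measurable_pi_lambda _ fun j => hRmeas _
  have hm : MeasurableSpace.comap Φ MeasurableSpace.pi ≤ ‹MeasurableSpace Ω› := hΦ.comap_le
  haveI : SigmaFinite (P.trim hm) := inferInstance
  set Ψ : Ω → ((j : Fin (k + 1)) → (Fin (j : ℕ) → Bool) → E) :=
    fun ω => fun j => fun v => X j v ω with hΨdef
  have hΨ : Measurable Ψ :=
    measurable_pi_lambda _ fun j => measurable_pi_lambda _ fun v => hXmeas _ _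
  have hG : MeasurableSpace.comap Ψ MeasurableSpace.pi ≤ ‹MeasurableSpace Ω› := hΨ.comap_le
  -- the coin and tree processes
  set Cfun : Ω → (ℕ → Bool) := fun ω => fun n : ℕ => C n ω with hCfundef
  set Xfun : Ω → ((pr : (n : ℕ) × (Fin n → Bool)) → E) :=
    fun ω => fun pr => X pr.1 pr.2 ω with hXfundef
  have hCfun : Measurable Cfun := measurable_pi_lambda _ fun n => hCmeas n
  have hXfun : Measurable Xfun := measurable_pi_lambda _ fun pr => hXmeas _ _
  have hIF : IndepFun Cfun Xfun P := (ProbabilityTheory.IndepFun_iff_Indep _ _ _).mpr hCX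
  -- projections and kernel integrals
  set pj : Bool → E × E → E := fun b y => bif b then y.2 else y.1 with hpjdef
  have hpjmeas : ∀ b, Measurable (pj b) := by
    intro b; cases b
    · exact measurable_fst
    · exact measurable_snd
  set I : Bool → E → ℝ := fun b x => ∫ y, g (pj b y) ∂(p x) with hIdef
  have hImeas : ∀ b, Measurable (I b) := by
    intro b
    have h : StronglyMeasurable fun q : E × (E × E) => g (pj b q.2) :=
      ((hgmeas.comp (hpjmeas b)).comp measurable_snd).stronglyMeasurable
    exact (h.integral_kernel_prod_right' (κ := p)).measurable
  have hIbdd : ∀ b x, |I b x| ≤ M := fun b x => aux_abs_integral_le _ fun y => hgM _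
  -- the candidate function in closed form
  have hh : ∀ x, ∫ y, g y ∂(pR x) = 2⁻¹ * I false x + 2⁻¹ * I true x := by
    intro x
    haveI : IsProbabilityMeasure ((p x).map Prod.fst) :=
      Measure.isProbabilityMeasure_map measurable_fst.aemeasurable
    haveI : IsProbabilityMeasure ((p x).map Prod.snd) :=
      Measure.isProbabilityMeasure_map measurable_snd.aemeasurable
    have h1 : Integrable g ((p x).map Prod.fst) := aux_int _ hgmeas hgM
    have h2 : Integrable g ((p x).map Prod.snd) := aux_int _ hgmeas hgM
    rw [hpR x, integral_add_measure (h1.smul_measure (by norm_num))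
        (h2.smul_measure (by norm_num)),
      integral_smul_measure, integral_smul_measure,
      integral_map measurable_fst.aemeasurable hgmeas.aestronglyMeasurable,
      integral_map measurable_snd.aemeasurable hgmeas.aestronglyMeasurable]
    have e1 : (fun y : E × E => g y.1) = fun y => g (pj false y) := rfl
    have e2 : (fun y : E × E => g y.2) = fun y => g (pj true y) := rfl
    rw [show ((2 : ℝ≥0∞)⁻¹).toReal = 2⁻¹ by simp]
    simp only [smul_eq_mul, hIdef]
    rw [e1, e2]
  have hcand_meas : Measurable fun x => ∫ y, g y ∂(pR x) := by
    rw [funext hh]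
    exact ((hImeas false).const_mul 2⁻¹).add ((hImeas true).const_mul 2⁻¹)
  have hcand_bdd : ∀ x, |∫ y, g y ∂(pR x)| ≤ M := by
    intro x
    rw [hh x]
    calc |2⁻¹ * I false x + 2⁻¹ * I true x|
        ≤ |2⁻¹ * I false x| + |2⁻¹ * I true x| := abs_add_le _ _
      _ = 2⁻¹ * |I false x| + 2⁻¹ * |I true x| := by
          rw [abs_mul, abs_mul, abs_of_nonneg (by norm_num : (0:ℝ) ≤ 2⁻¹)]
      _ ≤ 2⁻¹ * M + 2⁻¹ * M := by
          gcongr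
          · exact hIbdd false x
          · exact hIbdd true x
      _ = M := by ring
  -- integrability of the two processes
  have hf_int : Integrable (fun ω => g (R (k + 1) ω)) P :=
    aux_int _ (hgmeas.comp (hRmeas _)) fun ω => hgM _
  have hcand_int : Integrable (fun ω => ∫ y, g y ∂(pR (R k ω))) P :=
    aux_int _ (hcand_meas.comp (hRmeas k)) fun ω => hcand_bdd _
  refine (ae_eq_condExp_of_forall_setIntegral_eq hm hf_int
    (fun s _ _ => hcand_int.integrableOn) ?_ ?_).symm
  · -- the set-integral identity
    intro s hs _
    obtain ⟨S, hSmeas, rfl⟩ := hs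
    -- coin-pattern events and tree events
    set D : (Fin k → Bool) → Bool → Set Ω := fun v b =>
      Cfun ⁻¹' {c : ℕ → Bool | (∀ i : Fin k, c (i : ℕ) = v i) ∧ c k = b} with hDdef
    set S' : (Fin k → Bool) → Set ((pr : (n : ℕ) × (Fin n → Bool)) → E) := fun v =>
      (fun x => fun j : Fin (k + 1) => x ⟨(j : ℕ), fun i : Fin (j : ℕ) =>
        v ⟨(i : ℕ), lt_of_lt_of_le i.2 (Nat.lt_succ_iff.mp j.2)⟩⟩) ⁻¹' S with hS'def
    set Tv : (Fin k → Bool) → Set Ω := fun v => Xfun ⁻¹' (S' v) with hTvdef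
    -- basic measurability
    have hDmeasSet : ∀ (v : Fin k → Bool) (b : Bool),
        MeasurableSet {c : ℕ → Bool | (∀ i : Fin k, c (i : ℕ) = v i) ∧ c k = b} := by
      intro v b
      have h1 : {c : ℕ → Bool | (∀ i : Fin k, c (i : ℕ) = v i) ∧ c k = b}
          = (⋂ i : Fin k, (fun c : ℕ → Bool => c (i : ℕ)) ⁻¹' {v i})
            ∩ ((fun c : ℕ → Bool => c k) ⁻¹' {b}) := by
        ext c; simp
      rw [h1]
      exact (MeasurableSet.iInter fun i =>
        (measurable_pi_apply _) (measurableSet_singleton _)).inter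
        ((measurable_pi_apply _) (measurableSet_singleton _))
    have hDmeas : ∀ v b, MeasurableSet (D v b) := by
      intro v b; simp only [hDdef]; exact hCfun (hDmeasSet v b)
    have hS'meas : ∀ v, MeasurableSet (S' v) := by
      intro v; simp only [hS'def]
      exact (measurable_pi_lambda _ fun j => measurable_pi_apply _) hSmeas
    have hTvmeas : ∀ v, MeasurableSet (Tv v) := by
      intro v; simp only [hTvdef]; exact hXfun (hS'meas v)
    have hTvG : ∀ v, MeasurableSet[MeasurableSpace.comap Ψ MeasurableSpace.pi] (Tv v) := by
      intro v
      refine ⟨(fun x : (j : Fin (k + 1)) → (Fin (j : ℕ) → Bool) → E =>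
          fun j : Fin (k + 1) => x j (fun i : Fin (j : ℕ) =>
            v ⟨(i : ℕ), lt_of_lt_of_le i.2 (Nat.lt_succ_iff.mp j.2)⟩)) ⁻¹' S,
        (measurable_pi_lambda _ fun j =>
          (measurable_pi_apply _).comp (measurable_pi_apply _)) hSmeas, ?_⟩
      ext ω
      simp only [hTvdef, hS'def, hΨdef, hXfundef, Set.mem_preimage]
    -- the generation-k representation of Φ on a coin pattern
    have hΦmem : ∀ ω, Φ ω = fun j : Fin (k + 1) =>
        X (j : ℕ) (fun i : Fin (j : ℕ) => C (i : ℕ) ω) ω := by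
      intro ω; funext j; simp only [hΦdef]; rw [hR]
    have hmemiff : ∀ ω, ω ∈ Φ ⁻¹' S ↔
        Xfun ω ∈ S' (fun i : Fin k => C (i : ℕ) ω) := by
      intro ω
      simp only [Set.mem_preimage, hS'def, hXfundef]
      rw [hΦmem ω]
    -- coins to snoc
    have hcoins_snoc : ∀ ω, (fun i : Fin (k + 1) => C (i : ℕ) ω)
        = Fin.snoc (fun i : Fin k => C (i : ℕ) ω) (C k ω) := by
      intro ω; funext i
      induction i using Fin.lastCases with
      | last => simp
      | cast i' => simp
    have hRk1 : ∀ ω, R (k + 1) ω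
        = X (k + 1) (Fin.snoc (fun i : Fin k => C (i : ℕ) ω) (C k ω)) ω := by
      intro ω; rw [hR, hcoins_snoc ω]
    -- probability of a coin pattern
    have hChalf : ∀ (n : ℕ) (x : Bool), P ((C n) ⁻¹' {x}) = 2⁻¹ := by
      intro n x
      have ht : (C n) ⁻¹' {true} = {ω | C n ω = true} := by ext ω; simp
      cases x
      · have hfe : (C n) ⁻¹' {false} = ((C n) ⁻¹' {true})ᶜ := by
          ext ω; cases h : C n ω <;> simp [h]
        rw [hfe, measure_compl ((hCmeas n) (measurableSet_singleton _)) (measure_ne_top _ _),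
          measure_univ, ht, hCfair n, ENNReal.one_sub_inv_two]
      · rw [ht]; exact hCfair n
    have hPD : ∀ v b, P (D v b) = 2⁻¹ ^ (k + 1) := by
      intro v b
      set w : ℕ → Bool := fun n => if h : n < k + 1 then (Fin.snoc v b : Fin (k + 1) → Bool) ⟨n, h⟩ else true with hwdef
      have hDeq : D v b = ⋂ n ∈ Finset.range (k + 1), (C n) ⁻¹' {w n} := by
        ext ω
        simp only [hDdef, Set.mem_preimage, Set.mem_setOf_eq, Set.mem_iInter,
          Finset.mem_range, Set.mem_singleton_iff, hCfundef]
        constructor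
        · rintro ⟨hv, hb⟩ n hn
          have hfe : (fun i : Fin k => C (i : ℕ) ω) = v := funext fun i => hv i
          have h2 := congrFun (hcoins_snoc ω) ⟨n, hn⟩
          rw [hfe, hb] at h2
          simpa [hwdef, hn, Nat.lt_succ_iff.mp hn] using h2
        · intro hw
          constructor
          · intro i
            have h1 := hw (i : ℕ) (lt_trans i.2 (Nat.lt_succ_self k))
            have h2 : w (i : ℕ) = v i := by
              simp only [hwdef]
              rw [dif_pos (lt_trans i.2 (Nat.lt_succ_self k))]
              show (Fin.snoc v b : Fin (k + 1) → Bool) (Fin.castSucc i) = v i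
              rw [Fin.snoc_castSucc]
            rw [h1, h2]
          · have h1 := hw k (Nat.lt_succ_self k)
            have h2 : w k = b := by
              simp only [hwdef]
              rw [dif_pos (Nat.lt_succ_self k)]
              show (Fin.snoc v b : Fin (k + 1) → Bool) (Fin.last k) = b
              rw [Fin.snoc_last]
            rw [h1, h2]
      rw [hDeq, hCiid.meas_biInter (fun n _ => ⟨{w n}, measurableSet_singleton _, rfl⟩)]
      simp [hChalf]
    -- the main decomposition over coin patterns
    have hdecomp : ∀ (f : Ω → ℝ)
        (G : (Fin k → Bool) → Bool → (((pr : (n : ℕ) × (Fin n → Bool)) → E) → ℝ)),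
        (∀ v b, Measurable (G v b)) → (∀ v b x, |G v b x| ≤ M) →
        (∀ ω, f ω = G (fun i : Fin k => C (i : ℕ) ω) (C k ω) (Xfun ω)) →
        ∫ ω in Φ ⁻¹' S, f ω ∂P
          = ∑ v : Fin k → Bool, ∑ b : Bool,
              (P (D v b)).toReal * ∫ ω in Tv v, G v b (Xfun ω) ∂P := by
      intro f G hGmeas hGbdd hfG
      have key : ∀ ω, Set.indicator (Φ ⁻¹' S) f ω
          = ∑ v : Fin k → Bool, ∑ b : Bool,
              (Set.indicator {c : ℕ → Bool | (∀ i : Fin k, c (i : ℕ) = v i) ∧ c k = b}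
                (fun _ => (1 : ℝ)) (Cfun ω))
                * (Set.indicator (S' v) (G v b) (Xfun ω)) := by
        intro ω
        rw [Finset.sum_eq_single (fun i : Fin k => C (i : ℕ) ω)]
        · rw [Finset.sum_eq_single (C k ω)]
          · rw [Set.indicator_of_mem
              (show Cfun ω ∈ {c : ℕ → Bool | (∀ i : Fin k, c (i : ℕ) = (fun i : Fin k =>
                C (i : ℕ) ω) i) ∧ c k = C k ω} from ⟨fun i => rfl, rfl⟩), one_mul]
            by_cases hω : ω ∈ Φ ⁻¹' S
            · rw [Set.indicator_of_mem hω, Set.indicator_of_mem ((hmemiff ω).mp hω), hfG ω]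
            · rw [Set.indicator_of_notMem hω,
                Set.indicator_of_notMem (fun hc => hω ((hmemiff ω).mpr hc))]
          · intro b' _ hb'
            rw [Set.indicator_of_notMem (fun hc => hb' hc.2.symm), zero_mul]
          · exact fun hmem => absurd (Finset.mem_univ _) hmem
        · intro v' _ hv'
          refine Finset.sum_eq_zero fun b' _ => ?_
          rw [Set.indicator_of_notMem
            (fun hc => hv' (funext fun i => (hc.1 i).symm)), zero_mul]
        · exact fun hmem => absurd (Finset.mem_univ _) hmem
      have hq₁meas : ∀ (v : Fin k → Bool) (b : Bool),
          Measurable (Set.indicator {c : ℕ → Bool | (∀ i : Fin k, c (i : ℕ) = v i) ∧ c k = b}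
            (fun _ => (1 : ℝ))) := fun v b => measurable_const.indicator (hDmeasSet v b)
      have hq₂meas : ∀ (v : Fin k → Bool) (b : Bool),
          Measurable (Set.indicator (S' v) (G v b)) :=
        fun v b => (hGmeas v b).indicator (hS'meas v)
      have hterm_int : ∀ (v : Fin k → Bool) (b : Bool),
          Integrable (fun ω =>
            (Set.indicator {c : ℕ → Bool | (∀ i : Fin k, c (i : ℕ) = v i) ∧ c k = b}
              (fun _ => (1 : ℝ)) (Cfun ω))
              * (Set.indicator (S' v) (G v b) (Xfun ω))) P := by
        intro v b
        refine aux_int (c := 1 * M) _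
          (((hq₁meas v b).comp hCfun).mul ((hq₂meas v b).comp hXfun)) fun ω => ?_
        rw [abs_mul]
        exact mul_le_mul (aux_abs_indicator_le zero_le_one (fun _ => by simp) _)
          (aux_abs_indicator_le hM0 (fun x => hGbdd v b x) _) (abs_nonneg _) zero_le_one
      have hterm : ∀ (v : Fin k → Bool) (b : Bool),
          ∫ ω, (Set.indicator {c : ℕ → Bool | (∀ i : Fin k, c (i : ℕ) = v i) ∧ c k = b}
              (fun _ => (1 : ℝ)) (Cfun ω))
              * (Set.indicator (S' v) (G v b) (Xfun ω)) ∂P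
            = (P (D v b)).toReal * ∫ ω in Tv v, G v b (Xfun ω) ∂P := by
        intro v b
        have hind : IndepFun
            ((Set.indicator {c : ℕ → Bool | (∀ i : Fin k, c (i : ℕ) = v i) ∧ c k = b}
              (fun _ => (1 : ℝ))) ∘ Cfun)
            ((Set.indicator (S' v) (G v b)) ∘ Xfun) P :=
          hIF.comp (hq₁meas v b) (hq₂meas v b)
        have hmul := IndepFun.integral_mul_eq_mul_integral hind
          (((hq₁meas v b).comp hCfun).aestronglyMeasurable)
          (((hq₂meas v b).comp hXfun).aestronglyMeasurable)
        have h1 : ∫ ω, Set.indicator {c : ℕ → Bool | (∀ i : Fin k, c (i : ℕ) = v i) ∧ c k = b}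
            (fun _ => (1 : ℝ)) (Cfun ω) ∂P = (P (D v b)).toReal := by
          have he : (fun ω => Set.indicator {c : ℕ → Bool |
              (∀ i : Fin k, c (i : ℕ) = v i) ∧ c k = b} (fun _ => (1 : ℝ)) (Cfun ω))
              = Set.indicator (D v b) (fun _ => (1 : ℝ)) := by
            funext ω
            by_cases hc : Cfun ω ∈ {c : ℕ → Bool | (∀ i : Fin k, c (i : ℕ) = v i) ∧ c k = b}
            · rw [Set.indicator_of_mem hc, Set.indicator_of_mem (show ω ∈ D v b from hc)]
            · rw [Set.indicator_of_notMem hc,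
                Set.indicator_of_notMem (show ω ∉ D v b from hc)]
          rw [he, integral_indicator (hDmeas v b), setIntegral_const, smul_eq_mul, mul_one]; rfl
        have h2 : ∫ ω, Set.indicator (S' v) (G v b) (Xfun ω) ∂P
            = ∫ ω in Tv v, G v b (Xfun ω) ∂P := by
          have he : (fun ω => Set.indicator (S' v) (G v b) (Xfun ω))
              = Set.indicator (Tv v) (fun ω => G v b (Xfun ω)) := by
            funext ω
            by_cases hc : Xfun ω ∈ S' v
            · rw [Set.indicator_of_mem hc, Set.indicator_of_mem (show ω ∈ Tv v from hc)]
            · rw [Set.indicator_of_notMem hc,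
                Set.indicator_of_notMem (show ω ∉ Tv v from hc)]
          rw [he, integral_indicator (hTvmeas v)]
        rw [← h1, ← h2]
        exact hmul
      calc ∫ ω in Φ ⁻¹' S, f ω ∂P
          = ∫ ω, Set.indicator (Φ ⁻¹' S) f ω ∂P := (integral_indicator (hΦ hSmeas)).symm
        _ = ∫ ω, ∑ v : Fin k → Bool, ∑ b : Bool,
              (Set.indicator {c : ℕ → Bool | (∀ i : Fin k, c (i : ℕ) = v i) ∧ c k = b}
                (fun _ => (1 : ℝ)) (Cfun ω))
                * (Set.indicator (S' v) (G v b) (Xfun ω)) ∂P :=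
            integral_congr_ae (ae_of_all _ key)
        _ = ∑ v : Fin k → Bool, ∑ b : Bool, ∫ ω,
              (Set.indicator {c : ℕ → Bool | (∀ i : Fin k, c (i : ℕ) = v i) ∧ c k = b}
                (fun _ => (1 : ℝ)) (Cfun ω))
                * (Set.indicator (S' v) (G v b) (Xfun ω)) ∂P := by
            rw [integral_finset_sum _ (fun v _ => integrable_finset_sum _
              (fun b _ => hterm_int v b))]
            exact Finset.sum_congr rfl fun v _ =>
              integral_finset_sum _ (fun b _ => hterm_int v b)
        _ = ∑ v : Fin k → Bool, ∑ b : Bool,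
              (P (D v b)).toReal * ∫ ω in Tv v, G v b (Xfun ω) ∂P :=
            Finset.sum_congr rfl fun v _ => Finset.sum_congr rfl fun b _ => hterm v b
    -- the conditional expectation step via the tree Markov property
    have hkey : ∀ (v : Fin k → Bool) (b : Bool),
        ∫ ω in Tv v, g (X (k + 1) (Fin.snoc v b) ω) ∂P
          = ∫ ω in Tv v, I b (X k v ω) ∂P := by
      intro v b
      have hgvmeas : ∀ w : Fin k → Bool,
          Measurable (fun y : E × E => if w = v then g (pj b y) else 1) := by
        intro w; by_cases hw : w = v
        · simp only [if_pos hw]; exact hgmeas.comp (hpjmeas b)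
        · simpa [hw] using measurable_const
      have hgvbdd : ∀ w : Fin k → Bool,
          ∃ c, ∀ y : E × E, |(if w = v then g (pj b y) else 1 : ℝ)| ≤ c := by
        intro w; by_cases hw : w = v
        · exact ⟨M, fun y => by simpa [hw] using hgM (pj b y)⟩
        · exact ⟨1, fun y => by simp [hw]⟩
      have hae := hMarkov k (fun w y => if w = v then g (pj b y) else 1) hgvmeas hgvbdd
      have hL : (fun ω => ∏ w : Fin k → Bool,
          ∫ y, (if w = v then g (pj b y) else 1 : ℝ) ∂(p (X k w ω)))
          = fun ω => I b (X k v ω) := by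
        funext ω
        rw [Finset.prod_eq_single v (fun w _ hw => by simp [hw])
          (fun hv => absurd (Finset.mem_univ v) hv)]
        simp [hIdef]
      have hRt : (fun ω => ∏ w : Fin k → Bool,
          (if w = v then g (pj b (X (k + 1) (Fin.snoc w false) ω,
            X (k + 1) (Fin.snoc w true) ω)) else 1 : ℝ))
          = fun ω => g (X (k + 1) (Fin.snoc v b) ω) := by
        funext ω
        rw [Finset.prod_eq_single v (fun w _ hw => by simp [hw])
          (fun hv => absurd (Finset.mem_univ v) hv)]
        cases b <;> simp [hpjdef]
      rw [hL, hRt] at hae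
      calc ∫ ω in Tv v, g (X (k + 1) (Fin.snoc v b) ω) ∂P
          = ∫ ω in Tv v, (MeasureTheory.condExp
              (MeasurableSpace.comap Ψ MeasurableSpace.pi) P
              (fun ω => g (X (k + 1) (Fin.snoc v b) ω))) ω ∂P :=
            (setIntegral_condExp hG
              (aux_int P (hgmeas.comp (hXmeas _ _)) fun ω => hgM _) (hTvG v)).symm
        _ = ∫ ω in Tv v, I b (X k v ω) ∂P := by
            refine setIntegral_congr_ae (hG _ (hTvG v)) ?_
            filter_upwards [hae] with ω hω _
            exact hω.symm
    -- put everything together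
    rw [hdecomp (fun ω => g (R (k + 1) ω))
        (fun v b x => g (x ⟨k + 1, Fin.snoc v b⟩))
        (fun v b => hgmeas.comp (measurable_pi_apply _))
        (fun v b x => hgM _)
        (fun ω => show g (R (k + 1) ω) = g (Xfun ω ⟨k + 1,
            Fin.snoc (fun i : Fin k => C (i : ℕ) ω) (C k ω)⟩) by
          rw [hRk1 ω]),
      hdecomp (fun ω => ∫ y, g y ∂(pR (R k ω)))
        (fun v b x => ∫ y, g y ∂(pR (x ⟨k, v⟩)))
        (fun v b => hcand_meas.comp (measurable_pi_apply _))
        (fun v b x => hcand_bdd _)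
        (fun ω => show (∫ y, g y ∂(pR (R k ω)))
            = ∫ y, g y ∂(pR (Xfun ω ⟨k, fun i : Fin k => C (i : ℕ) ω⟩)) by
          rw [hR k ω])]
    simp only [hXfundef]
    refine Finset.sum_congr rfl fun v _ => ?_
    simp only [Fintype.sum_bool, hPD, hkey v true, hkey v false]
    have hcInt : IntegrableOn (fun ω => ∫ y, g y ∂(pR (X k v ω))) (Tv v) P :=
      (aux_int P (hcand_meas.comp (hXmeas k v)) fun ω => hcand_bdd _).integrableOn
    have hIInt : ∀ b : Bool, IntegrableOn (fun ω => I b (X k v ω)) (Tv v) P :=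
      fun b => (aux_int P ((hImeas b).comp (hXmeas k v)) fun ω => hIbdd b _).integrableOn
    have hsum : (∫ ω in Tv v, (∫ y, g y ∂(pR (X k v ω))) ∂P)
        + (∫ ω in Tv v, (∫ y, g y ∂(pR (X k v ω))) ∂P)
        = (∫ ω in Tv v, I true (X k v ω) ∂P) + (∫ ω in Tv v, I false (X k v ω) ∂P) := by
      rw [← integral_add hcInt hcInt, ← integral_add (hIInt true) (hIInt false)]
      refine integral_congr_ae (ae_of_all _ fun ω => ?_)
      simp only [hh]; ring
    linear_combination ((2 : ℝ≥0∞)⁻¹ ^ (k + 1)).toReal * hsum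
  · -- AEStronglyMeasurable'
    refine StronglyMeasurable.aestronglyMeasurable ?_
    have hRk : Measurable[MeasurableSpace.comap Φ MeasurableSpace.pi] (R k) := by
      have h1 : Measurable[MeasurableSpace.comap Φ MeasurableSpace.pi] Φ :=
        Measurable.of_comap_le le_rfl
      have h2 : (fun ω => Φ ω ⟨k, Nat.lt_succ_self k⟩) = R k := by
        funext ω; simp only [hΦdef]
      rw [← h2]
      exact (measurable_pi_apply _).comp h1
    exact (hcand_meas.comp hRk).stronglyMeasurable
end

section
/- With Z_k the empirical measure of generation k of a tree-indexed Markov chain and R_k the chain observed along an independent uniform random walk, one has almost surely ⟨Z_k, φ⟩ = E[φ(R_k) | Z_k] for every bounded measurable φ, and consequently E[⟨Z_k, φ⟩ | Z_{k-1}] = E[φ(R_k) | Z_{k-1}]. -/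
open MeasureTheory ProbabilityTheory
open scoped ENNReal

/-- With `Z_k` the empirical measure of generation `k` (here generations `k` and `k+1`
are considered, with states `Xk` and `Xk1`) and `R_{k+1} = Xk1 (U ·)` the chain observed
along an independent uniform random walk, one has almost surely
`⟨Z_{k+1}, φ⟩ = E[φ(R_{k+1}) | Z_{k+1}]`, and consequently
`E[⟨Z_{k+1}, φ⟩ | Z_k] = E[φ(R_{k+1}) | Z_k]`. -/
theorem stmt_10 {Ω : Type*} [MeasurableSpace Ω] (P : Measure Ω) [IsProbabilityMeasure P]
    {E : Type*} [MeasurableSpace E] (k : ℕ)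
    (Xk : (Fin k → Bool) → Ω → E) (Xk1 : (Fin (k + 1) → Bool) → Ω → E)
    (hXkmeas : ∀ v, Measurable (Xk v)) (hXk1meas : ∀ v, Measurable (Xk1 v))
    (U : Ω → Fin (k + 1) → Bool) (hUmeas : Measurable U)
    (hUunif : ∀ v : Fin (k + 1) → Bool, P {ω | U ω = v} = 2⁻¹ ^ (k + 1))
    (hUindep : IndepFun U
      (fun ω => ((fun v => Xk v ω), (fun v => Xk1 v ω))) P)
    (Zk Zk1 : Ω → Measure E)
    (hZk : ∀ ω, Zk ω = ((2 : ℝ≥0∞) ^ k)⁻¹ • ∑ v : Fin k → Bool, Measure.dirac (Xk v ω))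
    (hZk1 : ∀ ω, Zk1 ω =
      ((2 : ℝ≥0∞) ^ (k + 1))⁻¹ • ∑ v : Fin (k + 1) → Bool, Measure.dirac (Xk1 v ω))
    (φ : E → ℝ) (hφmeas : Measurable φ) (C : ℝ) (hφbd : ∀ x, |φ x| ≤ C) :
    ((fun ω => ((2 : ℝ) ^ (k + 1))⁻¹ * ∑ v : Fin (k + 1) → Bool, φ (Xk1 v ω))
        =ᵐ[P] P[(fun ω => φ (Xk1 (U ω) ω)) |
          MeasurableSpace.comap Zk1 inferInstance]) ∧
    (P[(fun ω => ((2 : ℝ) ^ (k + 1))⁻¹ * ∑ v : Fin (k + 1) → Bool, φ (Xk1 v ω)) |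
          MeasurableSpace.comap Zk inferInstance]
        =ᵐ[P] P[(fun ω => φ (Xk1 (U ω) ω)) |
          MeasurableSpace.comap Zk inferInstance]) := by
  classical
  -- notation
  set f : Ω → ℝ := fun ω => φ (Xk1 (U ω) ω) with hf
  set g : Ω → ℝ := fun ω => ((2 : ℝ) ^ (k + 1))⁻¹ * ∑ v : Fin (k + 1) → Bool, φ (Xk1 v ω)
    with hg
  set Y : Ω → ((Fin k → Bool) → E) × ((Fin (k + 1) → Bool) → E) :=
    fun ω => ((fun v => Xk v ω), (fun v => Xk1 v ω)) with hYdef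
  have hY : Measurable Y :=
    (measurable_pi_lambda _ hXkmeas).prodMk (measurable_pi_lambda _ hXk1meas)
  -- nonemptiness and 0 ≤ C
  have hΩ : Nonempty Ω := by
    rcases isEmpty_or_nonempty Ω with h | h
    · exfalso
      have h1 : P Set.univ = 1 := measure_univ
      rw [Set.univ_eq_empty_iff.mpr h] at h1
      simp at h1
    · exact h
  have hC : 0 ≤ C :=
    (abs_nonneg _).trans (hφbd (Xk1 (fun _ => false) (Classical.arbitrary Ω)))
  -- measurability and integrability of f and g
  have hpair : Measurable (fun p : Ω × (Fin (k + 1) → Bool) => φ (Xk1 p.2 p.1)) :=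
    measurable_from_prod_countable_left fun v => hφmeas.comp (hXk1meas v)
  have hfmeas : Measurable f := hpair.comp (measurable_id.prodMk hUmeas)
  have hgmeas : Measurable g :=
    (Finset.measurable_sum _ fun v _ => hφmeas.comp (hXk1meas v)).const_mul _
  have hfint : Integrable f P :=
    Integrable.mono' (integrable_const C) hfmeas.aestronglyMeasurable
      (Filter.Eventually.of_forall fun ω => by rw [Real.norm_eq_abs]; exact hφbd _)
  have hgbd : ∀ ω, ‖g ω‖ ≤ C := by
    intro ω
    rw [Real.norm_eq_abs, hg]
    calc |((2 : ℝ) ^ (k + 1))⁻¹ * ∑ v : Fin (k + 1) → Bool, φ (Xk1 v ω)|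
        ≤ ((2 : ℝ) ^ (k + 1))⁻¹ * |∑ v : Fin (k + 1) → Bool, φ (Xk1 v ω)| := by
          rw [abs_mul, abs_of_nonneg (by positivity : (0:ℝ) ≤ ((2 : ℝ) ^ (k + 1))⁻¹)]
      _ ≤ ((2 : ℝ) ^ (k + 1))⁻¹ * ∑ v : Fin (k + 1) → Bool, C := by
          gcongr
          exact (Finset.abs_sum_le_sum_abs _ _).trans
            (Finset.sum_le_sum fun v _ => hφbd _)
      _ = C := by
          rw [Finset.sum_const, Finset.card_univ]
          simp [Fintype.card_fun]
  have hgint : Integrable g P :=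
    Integrable.mono' (integrable_const C) hgmeas.aestronglyMeasurable
      (Filter.Eventually.of_forall hgbd)
  -- key set-integral identity over sets pulled back through Y
  have hφint : ∀ v, Integrable (fun ω => φ (Xk1 v ω)) P := fun v =>
    Integrable.mono' (integrable_const C) (hφmeas.comp (hXk1meas v)).aestronglyMeasurable
      (Filter.Eventually.of_forall fun ω => by rw [Real.norm_eq_abs]; exact hφbd _)
  have hkey : ∀ S, MeasurableSet S →
      ∫ ω in Y ⁻¹' S, f ω ∂P = ∫ ω in Y ⁻¹' S, g ω ∂P := by
    intro S hS
    have hA : MeasurableSet (Y ⁻¹' S) := hY hS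
    have hsplit : ∀ ω, (Y ⁻¹' S).indicator f ω =
        ∑ v : Fin (k + 1) → Bool,
          (if U ω = v then (1:ℝ) else 0) * (φ (Xk1 v ω) * S.indicator 1 (Y ω)) := by
      intro ω
      rw [Finset.sum_eq_single (U ω)]
      · by_cases h : Y ω ∈ S <;>
          simp [Set.indicator_of_mem, Set.indicator_of_notMem, h, hf]
      · intro v _ hv
        simp [Ne.symm hv]
      · simp
    have hterm : ∀ v : Fin (k + 1) → Bool,
        ∫ ω, (if U ω = v then (1:ℝ) else 0) * (φ (Xk1 v ω) * S.indicator 1 (Y ω)) ∂P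
          = ((2 : ℝ) ^ (k + 1))⁻¹ * ∫ ω in Y ⁻¹' S, φ (Xk1 v ω) ∂P := by
      intro v
      set F1 : (Fin (k + 1) → Bool) → ℝ := fun u => if u = v then 1 else 0 with hF1def
      set F2 : ((Fin k → Bool) → E) × ((Fin (k + 1) → Bool) → E) → ℝ :=
        fun p => φ (p.2 v) * S.indicator 1 p with hF2def
      have hF1 : Measurable F1 := measurable_of_countable _
      have hF2 : Measurable F2 :=
        (hφmeas.comp ((measurable_pi_apply v).comp measurable_snd)).mul
          (measurable_one.indicator hS)
      have hindep : IndepFun (F1 ∘ U) (F2 ∘ Y) P := hUindep.comp hF1 hF2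
      have hint1 : Integrable (F1 ∘ U) P := by
        refine Integrable.mono' (integrable_const 1)
          ((hF1.comp hUmeas).aestronglyMeasurable)
          (Filter.Eventually.of_forall fun ω => ?_)
        simp only [Function.comp, hF1def, Real.norm_eq_abs]
        split <;> simp
      have hint2 : Integrable (F2 ∘ Y) P := by
        refine Integrable.mono' (integrable_const C)
          ((hF2.comp hY).aestronglyMeasurable)
          (Filter.Eventually.of_forall fun ω => ?_)
        simp only [Function.comp, hF2def, Real.norm_eq_abs, abs_mul]
        by_cases h : Y ω ∈ S
        · simp [Set.indicator_of_mem h]; exact hφbd _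
        · simp [Set.indicator_of_notMem h, hC]
      have hmul := hindep.integral_mul_eq_mul_integral hint1.aestronglyMeasurable hint2.aestronglyMeasurable
      have h1 : ∫ ω, (F1 ∘ U) ω ∂P = ((2 : ℝ) ^ (k + 1))⁻¹ := by
        have heq : (F1 ∘ U) = (U ⁻¹' {v}).indicator (1 : Ω → ℝ) := by
          funext ω
          by_cases h : U ω = v <;>
            simp [Function.comp, hF1def, h, Set.indicator_of_mem,
              Set.indicator_of_notMem, Set.mem_preimage]
        have hPv : P (U ⁻¹' {v}) = 2⁻¹ ^ (k + 1) := hUunif v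
        rw [heq, integral_indicator_one (hUmeas (measurableSet_singleton v)), measureReal_def, hPv]
        simp [ENNReal.toReal_pow, ENNReal.toReal_inv]
      have h2 : ∫ ω, (F2 ∘ Y) ω ∂P = ∫ ω in Y ⁻¹' S, φ (Xk1 v ω) ∂P := by
        rw [← integral_indicator hA]
        congr 1
        funext ω
        by_cases h : Y ω ∈ S <;>
          simp [Function.comp, hF2def, h, Set.indicator_of_mem, Set.indicator_of_notMem] <;> rfl
      calc ∫ ω, (if U ω = v then (1:ℝ) else 0) * (φ (Xk1 v ω) * S.indicator 1 (Y ω)) ∂P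
          = ∫ ω, ((F1 ∘ U) * (F2 ∘ Y)) ω ∂P := by rfl
        _ = (∫ ω, (F1 ∘ U) ω ∂P) * ∫ ω, (F2 ∘ Y) ω ∂P := hmul
        _ = ((2 : ℝ) ^ (k + 1))⁻¹ * ∫ ω in Y ⁻¹' S, φ (Xk1 v ω) ∂P := by rw [h1, h2]
    calc ∫ ω in Y ⁻¹' S, f ω ∂P = ∫ ω, (Y ⁻¹' S).indicator f ω ∂P :=
          (integral_indicator hA).symm
      _ = ∫ ω, ∑ v : Fin (k + 1) → Bool,
            (if U ω = v then (1:ℝ) else 0) * (φ (Xk1 v ω) * S.indicator 1 (Y ω)) ∂P := by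
          exact integral_congr_ae (Filter.Eventually.of_forall hsplit)
      _ = ∑ v : Fin (k + 1) → Bool, ∫ ω,
            (if U ω = v then (1:ℝ) else 0) * (φ (Xk1 v ω) * S.indicator 1 (Y ω)) ∂P := by
          refine integral_finset_sum _ fun v _ => ?_
          refine Integrable.mono' (integrable_const C) ?_
            (Filter.Eventually.of_forall fun ω => ?_)
          · exact (((measurable_of_countable (fun u => if u = v then (1:ℝ) else 0)).comp
              hUmeas).mul ((hφmeas.comp (hXk1meas v)).mul
                ((measurable_one.indicator hS).comp hY))).aestronglyMeasurable
          · rw [Real.norm_eq_abs, abs_mul, abs_mul]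
            by_cases h : U ω = v
            · by_cases h' : Y ω ∈ S
              · simpa [h, h', Set.indicator_of_mem] using hφbd (Xk1 v ω)
              · simp [h, h', Set.indicator_of_notMem, hC]
            · simp [h, hC]
      _ = ∑ v : Fin (k + 1) → Bool,
            ((2 : ℝ) ^ (k + 1))⁻¹ * ∫ ω in Y ⁻¹' S, φ (Xk1 v ω) ∂P := by
          exact Finset.sum_congr rfl fun v _ => hterm v
      _ = ∫ ω in Y ⁻¹' S, g ω ∂P := by
          have h3 : ∫ ω in Y ⁻¹' S, g ω ∂P
              = ((2 : ℝ) ^ (k + 1))⁻¹ *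
                ∑ v : Fin (k + 1) → Bool, ∫ ω in Y ⁻¹' S, φ (Xk1 v ω) ∂P := by
            simp only [hg]
            rw [integral_const_mul,
              integral_finset_sum _ fun v _ => (hφint v).integrableOn]
          rw [h3, Finset.mul_sum]
  -- Z as functions of Y
  set G1 : ((Fin k → Bool) → E) × ((Fin (k + 1) → Bool) → E) → Measure E :=
    fun p => ((2 : ℝ≥0∞) ^ (k + 1))⁻¹ • ∑ v : Fin (k + 1) → Bool, Measure.dirac (p.2 v)
    with hG1def
  set G0 : ((Fin k → Bool) → E) × ((Fin (k + 1) → Bool) → E) → Measure E :=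
    fun p => ((2 : ℝ≥0∞) ^ k)⁻¹ • ∑ v : Fin k → Bool, Measure.dirac (p.1 v) with hG0def
  have hG1 : Measurable G1 := by
    apply Measure.measurable_of_measurable_coe
    intro s hs
    simp only [hG1def, Measure.smul_apply, Measure.finset_sum_apply, smul_eq_mul,
      Measure.dirac_apply' _ hs]
    exact (Finset.measurable_sum _ fun v _ =>
      (measurable_one.indicator hs).comp
        ((measurable_pi_apply v).comp measurable_snd)).const_mul _
  have hG0 : Measurable G0 := by
    apply Measure.measurable_of_measurable_coe
    intro s hs
    simp only [hG0def, Measure.smul_apply, Measure.finset_sum_apply, smul_eq_mul,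
      Measure.dirac_apply' _ hs]
    exact (Finset.measurable_sum _ fun v _ =>
      (measurable_one.indicator hs).comp
        ((measurable_pi_apply v).comp measurable_fst)).const_mul _
  have hZk1G : Zk1 = fun ω => G1 (Y ω) := funext fun ω => hZk1 ω
  have hZkG : Zk = fun ω => G0 (Y ω) := funext fun ω => hZk ω
  have hZ1meas : Measurable Zk1 := hZk1G ▸ hG1.comp hY
  have hZ0meas : Measurable Zk := hZkG ▸ hG0.comp hY
  have hm1 : MeasurableSpace.comap Zk1 inferInstance ≤ ‹MeasurableSpace Ω› :=
    hZ1meas.comap_le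
  have hm0 : MeasurableSpace.comap Zk inferInstance ≤ ‹MeasurableSpace Ω› :=
    hZ0meas.comap_le
  haveI : SigmaFinite (P.trim hm1) := inferInstance
  haveI : SigmaFinite (P.trim hm0) := inferInstance
  -- g is a measurable function of Zk1
  set ψ : E → ℝ≥0∞ := fun x => ENNReal.ofReal (φ x + C) with hψdef
  have hψ : Measurable ψ := (hφmeas.add_const C).ennreal_ofReal
  set h : Measure E → ℝ := fun μ => (∫⁻ x, ψ x ∂μ).toReal - C with hhdef
  have hh : Measurable h :=
    (Measure.measurable_lintegral hψ).ennreal_toReal.sub measurable_const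
  have hgh : g = fun ω => h (Zk1 ω) := by
    funext ω
    rw [hhdef, hZk1 ω]
    dsimp only
    rw [lintegral_smul_measure, lintegral_finset_sum_measure]
    simp only [lintegral_dirac' _ hψ]
    rw [smul_eq_mul, ENNReal.toReal_mul, ENNReal.toReal_sum (fun v _ => ENNReal.ofReal_ne_top)]
    have hval : ∀ v : Fin (k + 1) → Bool,
        (ψ (Xk1 v ω)).toReal = φ (Xk1 v ω) + C := fun v =>
      ENNReal.toReal_ofReal (by linarith [(abs_le.mp (hφbd (Xk1 v ω))).1])
    rw [Finset.sum_congr rfl fun v _ => hval v]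
    have hcard : (Finset.univ : Finset (Fin (k + 1) → Bool)).card = 2 ^ (k + 1) := by
      simp [Fintype.card_fun]
    rw [Finset.sum_add_distrib, Finset.sum_const, hcard]
    have hinv : (((2 : ℝ≥0∞) ^ (k + 1))⁻¹).toReal = ((2 : ℝ) ^ (k + 1))⁻¹ := by
      simp [ENNReal.toReal_inv, ENNReal.toReal_pow]
    rw [hinv, hg]
    have h2 : ((2 : ℝ) ^ (k + 1)) ≠ 0 := by positivity
    push_cast
    field_simp
    simp [nsmul_eq_mul]
  have hgm1 : StronglyMeasurable[MeasurableSpace.comap Zk1 inferInstance] g := by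
    rw [hgh]
    exact (hh.comp (Measurable.of_comap_le le_rfl)).stronglyMeasurable
  constructor
  · refine ae_eq_condExp_of_forall_setIntegral_eq hm1 hfint
      (fun s _ _ => hgint.integrableOn) (fun s hs _ => ?_) hgm1.aestronglyMeasurable
    obtain ⟨t, ht, rfl⟩ := hs
    have hpre : Zk1 ⁻¹' t = Y ⁻¹' (G1 ⁻¹' t) := by rw [hZk1G]; rfl
    rw [hpre]
    exact (hkey _ (hG1 ht)).symm
  · refine (ae_eq_condExp_of_forall_setIntegral_eq hm0 hgint
      (fun s _ _ => integrable_condExp.integrableOn) (fun s hs _ => ?_)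
      stronglyMeasurable_condExp.aestronglyMeasurable).symm
    rw [setIntegral_condExp hm0 hfint hs]
    obtain ⟨t, ht, rfl⟩ := hs
    have hpre : Zk ⁻¹' t = Y ⁻¹' (G0 ⁻¹' t) := by rw [hZkG]; rfl
    rw [hpre]
    exact hkey _ (hG0 ht)
end

section
/- Suppose the sequence of E-valued càdlàg processes (R̃ⁿ)_{n≥1} satisfies the compact containment condition, and define the measure-valued processes Z̃ⁿ with the relation E[⟨Z̃ⁿ_t, 1_A⟩] = P(R̃ⁿ_t ∈ A) and, for random times τ ≤ T, E[⟨Z̃ⁿ_τ, 1_A⟩] = P(R̃ⁿ_τ ∈ A). Then (Z̃ⁿ)_{n≥1} satisfies the compact containment condition in P(E): for every ε > 0 and T ≥ 0 there is a compact set L ⊆ P(E) with sup_n P(Z̃ⁿ_t ∉ L for some 0 ≤ t ≤ T) < ε. -/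
open MeasureTheory ProbabilityTheory
open scoped ENNReal

open MeasureTheory Filter Topology Set TopologicalSpace
open scoped ENNReal NNReal

/-- helper: pass a liminf inequality from `ℝ≥0∞` to `ℝ≥0` for bounded sequences. -/
lemma nnreal_le_liminf_of_ennreal {x : ℝ≥0} {f : ℕ → ℝ≥0}
    (hb : ∀ m, f m ≤ 1)
    (h : (x : ℝ≥0∞) ≤ atTop.liminf (fun m => (f m : ℝ≥0∞))) :
    x ≤ atTop.liminf f := by
  have aux : ENNReal.ofNNReal (atTop.liminf f) =
      atTop.liminf (ENNReal.ofNNReal ∘ f) := by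
    refine Monotone.map_liminf_of_continuousAt (F := atTop) ENNReal.coe_mono f ?_ ?_ ?_
    · exact ENNReal.continuous_coe.continuousAt
    · exact IsBoundedUnder.isCoboundedUnder_ge
        ⟨1, Filter.eventually_map.2 (Filter.Eventually.of_forall hb)⟩
    · exact ⟨0, by simp⟩
  have : (x : ℝ≥0∞) ≤ ENNReal.ofNNReal (atTop.liminf f) := by rw [aux]; exact h
  exact_mod_cast this

/-- Prokhorov-type theorem: a uniformly tight, "closed by level sets" family of probability
measures on a separable metric space is compact in the topology of weak convergence. -/
lemma isCompact_of_tight {E : Type*} [MetricSpace E] [SeparableSpace E]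
    [MeasurableSpace E] [BorelSpace E] (K : ℕ → Set E) (hK : ∀ k, IsCompact (K k))
    (a : ℕ → ℝ≥0∞) (ha : Tendsto a atTop (𝓝 0)) :
    IsCompact {μ : ProbabilityMeasure E | ∀ k, (μ : Measure E) (K k)ᶜ ≤ a k} := by
  haveI : SecondCountableTopology E := UniformSpace.secondCountable_of_separable E
  -- a countable family of open sets, closed under finite unions, containing `univ`,
  -- and able to interpolate between compacts and opens
  obtain ⟨B, hBc, -, hB⟩ := exists_countable_basis E
  obtain ⟨b, hb⟩ : ∃ b : ℕ → Set E, insert univ B = range b :=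
    (hBc.insert univ).exists_eq_range (insert_nonempty _ _)
  have hbo : ∀ i, IsOpen (b i) := by
    intro i
    have : b i ∈ insert univ B := by rw [hb]; exact mem_range_self i
    rcases this with h | h
    · rw [h]; exact isOpen_univ
    · exact hB.isOpen h
  obtain ⟨i0, hi0⟩ : ∃ i0, b i0 = univ := by
    have : (univ : Set E) ∈ insert univ B := mem_insert _ _
    rw [hb] at this
    obtain ⟨i, hi⟩ := this
    exact ⟨i, hi⟩
  classical
  set V : Finset ℕ → Set E := fun S => ⋃ i ∈ S, b i with hV
  have hVo : ∀ S, IsOpen (V S) := fun S => isOpen_biUnion fun i _ => hbo i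
  have hVunion : ∀ S T, V (S ∪ T) = V S ∪ V T := fun S T => Finset.set_biUnion_union S T b
  have hVuniv : V {i0} = univ := by simp [hV, hi0]
  have hVbasis : ∀ {C G : Set E}, IsCompact C → IsOpen G → C ⊆ G →
      ∃ S, C ⊆ V S ∧ V S ⊆ G := by
    intro C G hC hG hCG
    have hcov : C ⊆ ⋃ i : {i : ℕ // b i ⊆ G}, b i := by
      intro x hx
      obtain ⟨v, hvB, hxv, hvG⟩ := hB.exists_subset_of_mem_open (hCG hx) hG
      obtain ⟨i, hi⟩ : ∃ i, b i = v := by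
        have : v ∈ insert univ B := mem_insert_of_mem _ hvB
        rw [hb] at this; exact this
      exact mem_iUnion.2 ⟨⟨i, by rw [hi]; exact hvG⟩, by simpa [hi] using hxv⟩
    obtain ⟨t, ht⟩ := hC.elim_finite_subcover (fun i : {i : ℕ // b i ⊆ G} => b i)
      (fun i => hbo i) hcov
    refine ⟨t.image Subtype.val, ?_, ?_⟩
    · intro x hx
      obtain ⟨i, hit, hxi⟩ := mem_iUnion₂.1 (ht hx)
      exact mem_iUnion₂.2 ⟨i.1, Finset.mem_image_of_mem _ hit, hxi⟩
    · intro x hx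
      obtain ⟨j, hjS, hxj⟩ := mem_iUnion₂.1 hx
      obtain ⟨i, hit, rfl⟩ := Finset.mem_image.1 hjS
      exact i.2 hxj
  -- sequential compactness
  letI : MetricSpace (ProbabilityMeasure E) := metrizableSpaceMetric _
  rw [isCompact_iff_isSeqCompact]
  intro u hu
  simp only [mem_setOf_eq] at hu
  -- extract a subsequence along which all `V S` measures converge
  have hcpt : IsCompact (univ : Set (Finset ℕ → ℝ≥0∞)) := isCompact_univ
  obtain ⟨y, -, φ, hφ, hyt⟩ := hcpt.tendsto_subseq
    (x := fun m S => (u m : Measure E) (V S)) (fun m => mem_univ _)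
  have hy : ∀ S, Tendsto (fun m => (u (φ m) : Measure E) (V S)) atTop (𝓝 (y S)) :=
    fun S => tendsto_pi_nhds.1 hyt S
  have hy1 : ∀ S, y S ≤ 1 := fun S =>
    le_of_tendsto (hy S) (.of_forall fun m => prob_le_one)
  have hyuniv : y {i0} = 1 := by
    refine tendsto_nhds_unique (hy {i0}) ?_
    simp only [hVuniv, measure_univ]
    exact tendsto_const_nhds
  have hymono : ∀ {S T}, V S ⊆ V T → y S ≤ y T := fun {S T} h =>
    le_of_tendsto_of_tendsto' (hy S) (hy T) fun m => measure_mono h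
  -- the content
  set lam : Compacts E → ℝ≥0∞ := fun C => ⨅ (S : Finset ℕ) (_ : (C : Set E) ⊆ V S), y S
    with hlam
  have hlam_le_one : ∀ C, lam C ≤ 1 := by
    intro C
    have hsub : (C : Set E) ⊆ V ({i0} : Finset ℕ) := by rw [hVuniv]; exact subset_univ _
    exact (iInf₂_le ({i0} : Finset ℕ) hsub).trans (le_of_eq hyuniv)
  have hlam_ne_top : ∀ C, lam C ≠ ∞ := fun C => ((hlam_le_one C).trans_lt ENNReal.one_lt_top).ne
  have hlam_lt : ∀ (C : Compacts E) {r : ℝ≥0∞}, lam C < r →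
      ∃ S, (C : Set E) ⊆ V S ∧ y S < r := by
    intro C r h
    rw [hlam] at h
    rw [iInf_lt_iff] at h
    obtain ⟨S, hS⟩ := h
    rw [iInf_lt_iff] at hS
    obtain ⟨hSs, hSlt⟩ := hS
    exact ⟨S, hSs, hSlt⟩
  have hlam_le : ∀ (C : Compacts E) (S : Finset ℕ), (C : Set E) ⊆ V S → lam C ≤ y S :=
    fun C S h => iInf₂_le S h
  have hlam_mono : ∀ {C₁ C₂ : Compacts E}, (C₁ : Set E) ⊆ C₂ → lam C₁ ≤ lam C₂ :=
    fun {C₁ C₂} h => le_iInf₂ fun S hS => hlam_le C₁ S (h.trans hS)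
  have hlam_subadd : ∀ C₁ C₂ : Compacts E, lam (C₁ ⊔ C₂) ≤ lam C₁ + lam C₂ := by
    intro C₁ C₂
    refine ENNReal.le_of_forall_pos_le_add fun ε hε _ => ?_
    have hε2 : ((ε : ℝ≥0∞) / 2) ≠ 0 := by
      simp [ENNReal.div_eq_zero_iff, (ENNReal.coe_pos.2 hε).ne']
    obtain ⟨S₁, hS₁, hy₁⟩ := hlam_lt C₁ (ENNReal.lt_add_right (hlam_ne_top C₁) hε2)
    obtain ⟨S₂, hS₂, hy₂⟩ := hlam_lt C₂ (ENNReal.lt_add_right (hlam_ne_top C₂) hε2)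
    have hsub : ((C₁ ⊔ C₂ : Compacts E) : Set E) ⊆ V (S₁ ∪ S₂) := by
      rw [Compacts.coe_sup, hVunion]
      exact union_subset_union hS₁ hS₂
    have hadd : y (S₁ ∪ S₂) ≤ y S₁ + y S₂ := by
      refine le_of_tendsto_of_tendsto' (hy (S₁ ∪ S₂)) ((hy S₁).add (hy S₂)) fun m => ?_
      rw [hVunion]
      exact measure_union_le _ _
    calc lam (C₁ ⊔ C₂) ≤ y (S₁ ∪ S₂) := hlam_le _ _ hsub
      _ ≤ y S₁ + y S₂ := hadd
      _ ≤ (lam C₁ + ε / 2) + (lam C₂ + ε / 2) := add_le_add hy₁.le hy₂.le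
      _ = lam C₁ + lam C₂ + (ε / 2 + ε / 2) := by ring
      _ = lam C₁ + lam C₂ + ε := by rw [ENNReal.add_halves]
  have hlam_superadd : ∀ C₁ C₂ : Compacts E, Disjoint (C₁ : Set E) (C₂ : Set E) →
      lam C₁ + lam C₂ ≤ lam (C₁ ⊔ C₂) := by
    intro C₁ C₂ hdis
    obtain ⟨W₁, W₂, hW₁o, hW₂o, hsub₁, hsub₂, hWdis⟩ :=
      SeparatedNhds.of_isCompact_isCompact C₁.2 C₂.2 hdis
    refine le_iInf₂ fun S hS => ?_
    rw [Compacts.coe_sup] at hS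
    obtain ⟨S₁, hS₁, hS₁sub⟩ := hVbasis C₁.2 ((hVo S).inter hW₁o)
      (subset_inter ((subset_union_left).trans hS) hsub₁)
    obtain ⟨S₂, hS₂, hS₂sub⟩ := hVbasis C₂.2 ((hVo S).inter hW₂o)
      (subset_inter ((subset_union_right).trans hS) hsub₂)
    have hdisV : Disjoint (V S₁) (V S₂) :=
      hWdis.mono (hS₁sub.trans inter_subset_right) (hS₂sub.trans inter_subset_right)
    have hVS : V S₁ ∪ V S₂ ⊆ V S :=
      union_subset (hS₁sub.trans inter_subset_left) (hS₂sub.trans inter_subset_left)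
    have : y S₁ + y S₂ ≤ y S := by
      refine le_of_tendsto_of_tendsto' ((hy S₁).add (hy S₂)) (hy S) fun m => ?_
      rw [← measure_union hdisV (hVo S₂).measurableSet]
      exact measure_mono hVS
    exact le_trans (add_le_add (hlam_le _ _ hS₁) (hlam_le _ _ hS₂)) this
  -- build the content and its measure
  set c : Content E :=
    { toFun := fun C => (lam C).toNNReal
      mono' := fun C₁ C₂ h => ENNReal.toNNReal_mono (hlam_ne_top C₂) (hlam_mono h)
      sup_disjoint' := by
        intro C₁ C₂ hdis _ _
        have h₁ : lam (C₁ ⊔ C₂) = lam C₁ + lam C₂ :=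
          le_antisymm (hlam_subadd C₁ C₂) (hlam_superadd C₁ C₂ hdis)
        show (lam (C₁ ⊔ C₂)).toNNReal = (lam C₁).toNNReal + (lam C₂).toNNReal
        rw [h₁, ENNReal.toNNReal_add (hlam_ne_top C₁) (hlam_ne_top C₂)]
      sup_le' := fun C₁ C₂ => by
        show (lam (C₁ ⊔ C₂)).toNNReal ≤ (lam C₁).toNNReal + (lam C₂).toNNReal
        have := (hlam_subadd C₁ C₂)
        have h2 : (lam C₁ + lam C₂) ≠ ∞ := by
          simp [ENNReal.add_eq_top, hlam_ne_top C₁, hlam_ne_top C₂]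
        calc (lam (C₁ ⊔ C₂)).toNNReal ≤ (lam C₁ + lam C₂).toNNReal :=
              ENNReal.toNNReal_mono h2 this
          _ = _ := ENNReal.toNNReal_add (hlam_ne_top C₁) (hlam_ne_top C₂) } with hc
  have hcoe : ∀ C : Compacts E, (c C : ℝ≥0∞) = lam C := by
    intro C
    show ((lam C).toNNReal : ℝ≥0∞) = lam C
    exact ENNReal.coe_toNNReal (hlam_ne_top C)
  set M : Measure E := c.measure with hM
  have hMopen : ∀ {G : Set E} (hG : IsOpen G),
      M G = ⨆ (C : Compacts E) (_ : (C : Set E) ⊆ G), lam C := by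
    intro G hG
    rw [hM, Content.measure_apply c hG.measurableSet, Content.outerMeasure_of_isOpen c G hG]
    unfold Content.innerContent
    exact iSup_congr fun C => iSup_congr fun _ => hcoe C
  -- M is inside the liminf of the subsequence, on open sets
  have h_liminf : ∀ {G : Set E}, IsOpen G →
      M G ≤ atTop.liminf (fun m => (u (φ m) : Measure E) G) := by
    intro G hG
    rw [hMopen hG]
    refine iSup₂_le fun C hCG => ?_
    obtain ⟨S, hCS, hSG⟩ := hVbasis C.2 hG hCG
    calc lam C ≤ y S := hlam_le _ _ hCS
      _ = atTop.liminf (fun m => (u (φ m) : Measure E) (V S)) := (hy S).liminf_eq.symm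
      _ ≤ atTop.liminf (fun m => (u (φ m) : Measure E) G) :=
          liminf_le_liminf (.of_forall fun m => measure_mono hSG)
  -- tail bounds for the limit
  have hMtail : ∀ k, M (K k)ᶜ ≤ a k := by
    intro k
    refine le_trans (h_liminf (hK k).isClosed.isOpen_compl) ?_
    refine le_trans (liminf_le_liminf (.of_forall fun m => hu (φ m) k)) ?_
    simp [liminf_const]
  -- M is a probability measure
  have hMuniv : M univ = 1 := by
    refine le_antisymm ?_ ?_
    · rw [hMopen isOpen_univ]
      exact iSup₂_le fun C _ => hlam_le_one C
    · have key : ∀ k, (1 : ℝ≥0∞) ≤ M univ + a k := by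
        intro k
        have h1 : lam ⟨K k, hK k⟩ ≤ M univ := by
          rw [hMopen isOpen_univ]
          exact le_iSup₂ (f := fun (C : Compacts E) (_ : (C : Set E) ⊆ univ) => lam C)
            ⟨K k, hK k⟩ (subset_univ _)
        have h2 : (1 : ℝ≥0∞) - a k ≤ lam ⟨K k, hK k⟩ := by
          refine le_iInf₂ fun S hS => ?_
          rw [tsub_le_iff_right]
          refine le_of_tendsto_of_tendsto' (tendsto_const_nhds)
            ((hy S).add tendsto_const_nhds) fun m => ?_
          calc (1 : ℝ≥0∞) = (u (φ m) : Measure E) univ := measure_univ.symm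
            _ ≤ (u (φ m) : Measure E) (V S ∪ (K k)ᶜ) := by
                refine measure_mono fun x _ => ?_
                by_cases hx : x ∈ K k
                · exact Or.inl (hS hx)
                · exact Or.inr hx
            _ ≤ (u (φ m) : Measure E) (V S) + (u (φ m) : Measure E) (K k)ᶜ :=
                measure_union_le _ _
            _ ≤ (u (φ m) : Measure E) (V S) + a k := by
                gcongr
                exact hu (φ m) k
        calc (1 : ℝ≥0∞) ≤ (1 - a k) + a k := le_tsub_add
          _ ≤ lam ⟨K k, hK k⟩ + a k := by gcongr
          _ ≤ M univ + a k := by gcongr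
      have : Tendsto (fun k => M univ + a k) atTop (𝓝 (M univ + 0)) :=
        tendsto_const_nhds.add ha
      rw [add_zero] at this
      exact ge_of_tendsto' this key
  haveI hMprob : IsProbabilityMeasure M := ⟨hMuniv⟩
  refine ⟨⟨M, hMprob⟩, ?_, φ, hφ, ?_⟩
  · -- membership in the tight set
    intro k
    exact hMtail k
  · -- weak convergence
    have := tendsto_of_forall_isOpen_le_liminf_nat
      (μ := (⟨M, hMprob⟩ : ProbabilityMeasure E)) (μs := fun m => u (φ m)) ?_
    · exact this
    intro G hG
    refine nnreal_le_liminf_of_ennreal (fun m => ProbabilityMeasure.apply_le_one _ _) ?_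
    refine (le_of_eq (ProbabilityMeasure.ennreal_coeFn_eq_coeFn_toMeasure _ _)).trans ?_
    refine le_trans (h_liminf hG) (le_of_eq ?_)
    congr 1
    funext m
    exact (ProbabilityMeasure.ennreal_coeFn_eq_coeFn_toMeasure _ _).symm

/-- If the `E`-valued processes `R n` satisfy the compact containment condition and the
measure-valued processes `Z n` are linked to `R n` by
`E[⟨Z n t, 1_A⟩] = P(R n t ∈ A)` (also at random times `τ ≤ T`), then the processes
`Z n` satisfy the compact containment condition in `P(E)` with the weak topology. -/
theorem stmt_12 {Ω : Type*} [MeasurableSpace Ω] (P : Measure Ω) [IsProbabilityMeasure P]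
    {E : Type*} [MetricSpace E] [CompleteSpace E] [TopologicalSpace.SeparableSpace E]
    [MeasurableSpace E] [BorelSpace E]
    (R : ℕ → ℝ → Ω → E) (Z : ℕ → ℝ → Ω → ProbabilityMeasure E)
    (hlink : ∀ (n : ℕ) (t : ℝ) (A : Set E), MeasurableSet A →
      ∫⁻ ω, (Z n t ω : Measure E) A ∂P = P {ω | R n t ω ∈ A})
    (hlinkτ : ∀ (n : ℕ) (T : ℝ) (τ : Ω → ℝ), (∀ ω, τ ω ∈ Set.Icc 0 T) →
      ∀ A : Set E, MeasurableSet A →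
        ∫⁻ ω, (Z n (τ ω) ω : Measure E) A ∂P = P {ω | R n (τ ω) ω ∈ A})
    (hcc : ∀ ε : ℝ≥0∞, 0 < ε → ∀ T : ℝ, 0 ≤ T → ∃ K : Set E, IsCompact K ∧
      (⨆ n, P {ω | ∃ t ∈ Set.Icc 0 T, R n t ω ∉ K}) < ε) :
    ∀ ε : ℝ≥0∞, 0 < ε → ∀ T : ℝ, 0 ≤ T → ∃ L : Set (ProbabilityMeasure E), IsCompact L ∧
      (⨆ n, P {ω | ∃ t ∈ Set.Icc 0 T, Z n t ω ∉ L}) < ε := by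
  classical
  intro ε hε T hT
  set ε' := min ε 1 with hε'def
  have hε'pos : 0 < ε' := lt_min hε zero_lt_one
  have hε'le1 : ε' ≤ 1 := min_le_right _ _
  have hε'ne_top : ε' ≠ ∞ := (hε'le1.trans_lt ENNReal.one_lt_top).ne
  set b : ℕ → ℝ≥0∞ := fun k => (2 : ℝ≥0∞)⁻¹ ^ k with hbdef
  set d : ℕ → ℝ≥0∞ := fun k => ε' * (2 : ℝ≥0∞)⁻¹ ^ (k + 2) with hddef
  have hhalf_pos : (0 : ℝ≥0∞) < 2⁻¹ := ENNReal.inv_pos.2 (by norm_num)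
  have hhalf_ne_top : ((2 : ℝ≥0∞)⁻¹) ≠ ∞ := ENNReal.inv_ne_top.2 (by norm_num)
  have hb_pos : ∀ k, 0 < b k := fun k => ENNReal.pow_pos hhalf_pos k
  have hb_ne_top : ∀ k, b k ≠ ∞ := fun k => ENNReal.pow_ne_top hhalf_ne_top
  have hb_le_one : ∀ k, b k ≤ 1 :=
    fun k => pow_le_one₀ zero_le (ENNReal.inv_le_one.2 (by norm_num))
  have hd_pos : ∀ k, 0 < d k :=
    fun k => ENNReal.mul_pos hε'pos.ne' (ENNReal.pow_pos hhalf_pos _).ne'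
  have hbd_pos : ∀ k, 0 < b k * d k :=
    fun k => ENNReal.mul_pos (hb_pos k).ne' (hd_pos k).ne'
  choose K hKc hKb using fun k => hcc (b k * d k) (hbd_pos k) T hT
  refine ⟨{μ : ProbabilityMeasure E | ∀ k, (μ : Measure E) (K k)ᶜ ≤ b k},
    isCompact_of_tight K hKc b
      (ENNReal.tendsto_pow_atTop_nhds_zero_of_lt_one (ENNReal.inv_lt_one.2 (by norm_num))), ?_⟩
  have main : ∀ n, P {ω | ∃ t ∈ Set.Icc 0 T,
      Z n t ω ∉ {μ : ProbabilityMeasure E | ∀ k, (μ : Measure E) (K k)ᶜ ≤ b k}} ≤ ε' / 2 := by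
    intro n
    have hsub : {ω | ∃ t ∈ Set.Icc 0 T,
        Z n t ω ∉ {μ : ProbabilityMeasure E | ∀ k, (μ : Measure E) (K k)ᶜ ≤ b k}} ⊆
        ⋃ k, {ω | ∃ t ∈ Set.Icc 0 T, b k < (Z n t ω : Measure E) (K k)ᶜ} := by
      intro ω hω
      obtain ⟨t, ht, hZ⟩ := hω
      simp only [Set.mem_setOf_eq, not_forall, not_le] at hZ
      obtain ⟨k, hk⟩ := hZ
      exact Set.mem_iUnion.2 ⟨k, t, ht, hk⟩
    refine le_trans (measure_mono hsub) (le_trans (measure_iUnion_le _) ?_)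
    have hk_bound : ∀ k,
        P {ω | ∃ t ∈ Set.Icc 0 T, b k < (Z n t ω : Measure E) (K k)ᶜ} ≤ d k := by
      intro k
      set A := {ω | ∃ t ∈ Set.Icc 0 T, b k < (Z n t ω : Measure E) (K k)ᶜ} with hA
      set τ : Ω → ℝ := fun ω =>
        if h : ∃ t ∈ Set.Icc 0 T, b k < (Z n t ω : Measure E) (K k)ᶜ then h.choose else 0
        with hτ
      have hτmem : ∀ ω, τ ω ∈ Set.Icc 0 T := by
        intro ω
        by_cases h : ∃ t ∈ Set.Icc 0 T, b k < (Z n t ω : Measure E) (K k)ᶜ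
        · rw [hτ]; simp only [dif_pos h]; exact h.choose_spec.1
        · rw [hτ]; simp only [dif_neg h]; exact ⟨le_refl 0, hT⟩
      set g : Ω → ℝ≥0∞ := fun ω => (Z n (τ ω) ω : Measure E) (K k) with hg
      have hg1 : ∀ ω, g ω ≤ 1 := fun ω => prob_le_one
      have hAg : ∀ ω ∈ A, g ω + b k ≤ 1 := by
        intro ω hω
        have h : ∃ t ∈ Set.Icc 0 T, b k < (Z n t ω : Measure E) (K k)ᶜ := hω
        have hτω : b k < (Z n (τ ω) ω : Measure E) (K k)ᶜ := by
          rw [hτ]; simp only [dif_pos h]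
          exact h.choose_spec.2
        have hsum : g ω + (Z n (τ ω) ω : Measure E) (K k)ᶜ = 1 := by
          rw [hg]
          have := measure_add_measure_compl (μ := (Z n (τ ω) ω : Measure E))
            (hKc k).isClosed.measurableSet
          simpa [measure_univ] using this
        calc g ω + b k ≤ g ω + (Z n (τ ω) ω : Measure E) (K k)ᶜ :=
              add_le_add_right hτω.le _
          _ = 1 := hsum
      have hint : ∫⁻ ω, g ω ∂P = P {ω | R n (τ ω) ω ∈ K k} :=
        hlinkτ n T τ hτmem (K k) (hKc k).isClosed.measurableSet
      have hsimple : ∀ s : MeasureTheory.SimpleFunc Ω ℝ≥0∞, (⇑s ≤ g) →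
          s.lintegral P + b k * P A ≤ 1 := by
        intro s hs
        set Bs := {ω | s ω + b k ≤ 1} with hBs
        have hBmeas : MeasurableSet Bs :=
          (s.measurable.add measurable_const) measurableSet_Iic
        have hAB : A ⊆ Bs := fun ω hω =>
          le_trans (add_le_add_left (hs ω) _) (hAg ω hω)
        have hpoint : ∀ ω, s ω + Bs.indicator (fun _ => b k) ω ≤ 1 := by
          intro ω
          by_cases hω : ω ∈ Bs
          · rw [Set.indicator_of_mem hω]; exact hω
          · rw [Set.indicator_of_notMem hω, add_zero]
            exact (hs ω).trans (hg1 ω)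
        have hI : ∫⁻ ω, (s ω + Bs.indicator (fun _ => b k) ω) ∂P ≤ 1 := by
          refine le_trans (lintegral_mono hpoint) ?_
          simp [lintegral_const, measure_univ]
        rw [lintegral_add_left s.measurable, lintegral_indicator_const hBmeas,
          MeasureTheory.SimpleFunc.lintegral_eq_lintegral] at hI
        exact le_trans
          (add_le_add_right (mul_le_mul_right (measure_mono hAB) (b k)) _) hI
      have hgle : ∫⁻ ω, g ω ∂P + b k * P A ≤ 1 := by
        haveI : Nonempty {s : MeasureTheory.SimpleFunc Ω ℝ≥0∞ // ⇑s ≤ g} :=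
          ⟨⟨0, fun ω => by simp⟩⟩
        rw [MeasureTheory.lintegral_def, iSup_subtype', ENNReal.iSup_add]
        exact iSup_le fun s => hsimple s.1 s.2
      have hfin : ∫⁻ ω, g ω ∂P ≤ 1 := by
        refine le_trans (lintegral_mono hg1) ?_
        simp [lintegral_const, measure_univ]
      have hother : (1 : ℝ≥0∞) ≤ ∫⁻ ω, g ω ∂P + b k * d k := by
        have hbad : P {ω | R n (τ ω) ω ∉ K k} ≤ b k * d k := by
          refine le_trans (measure_mono fun ω hω =>
            show ω ∈ {ω | ∃ t ∈ Set.Icc 0 T, R n t ω ∉ K k} from ⟨τ ω, hτmem ω, hω⟩) ?_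
          exact le_trans (le_iSup (fun n => P {ω | ∃ t ∈ Set.Icc 0 T, R n t ω ∉ K k}) n)
            (hKb k).le
        calc (1 : ℝ≥0∞) = P Set.univ := measure_univ.symm
          _ = P ({ω | R n (τ ω) ω ∈ K k} ∪ {ω | R n (τ ω) ω ∈ K k}ᶜ) := by
              rw [Set.union_compl_self]
          _ ≤ P {ω | R n (τ ω) ω ∈ K k} + P {ω | R n (τ ω) ω ∈ K k}ᶜ :=
              measure_union_le _ _
          _ = P {ω | R n (τ ω) ω ∈ K k} + P {ω | R n (τ ω) ω ∉ K k} := by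
              rw [Set.compl_setOf]
          _ ≤ ∫⁻ ω, g ω ∂P + b k * d k := by
              rw [hint]; gcongr
      have hcomb : ∫⁻ ω, g ω ∂P + b k * P A ≤ ∫⁻ ω, g ω ∂P + b k * d k :=
        le_trans hgle hother
      have hne : ∫⁻ ω, g ω ∂P ≠ ∞ := (hfin.trans_lt ENNReal.one_lt_top).ne
      have := (ENNReal.add_le_add_iff_left hne).1 hcomb
      exact (ENNReal.mul_le_mul_iff_right (hb_pos k).ne' (hb_ne_top k)).1 this
    refine le_trans (ENNReal.tsum_le_tsum hk_bound) ?_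
    have hsum : ∑' k, d k = ε' / 2 := by
      rw [hddef]
      rw [ENNReal.tsum_mul_left]
      have h1 : ∑' (k : ℕ), ((2 : ℝ≥0∞)⁻¹) ^ (k + 2) = 2⁻¹ := by
        have ha : ∑' (k : ℕ), ((2 : ℝ≥0∞)⁻¹) ^ (k + 2)
            = ∑' (k : ℕ), ((2 : ℝ≥0∞)⁻¹) ^ 2 * (2⁻¹) ^ k :=
          tsum_congr fun k => by rw [← pow_add]; ring_nf
        rw [ha, ENNReal.tsum_mul_left, ENNReal.tsum_geometric]
        rw [ENNReal.one_sub_inv_two, inv_inv, pow_two, mul_assoc,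
          ENNReal.inv_mul_cancel (by norm_num) (by norm_num), mul_one]
      rw [h1, ENNReal.div_eq_inv_mul, mul_comm]
    exact le_of_eq hsum
  exact lt_of_le_of_lt (iSup_le main)
    (lt_of_lt_of_le (ENNReal.half_lt_self hε'pos.ne' hε'ne_top) (min_le_left _ _))
end
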